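/- arXiv:1002.4374 — 3 statements merged into one kernel-verified Lean document; each statement's English description precedes it below -/
import Mathlib

section
/- Let A be an additive commutative monoid that is cancellative, zero-sum-free (a + b = 0 implies a = b = 0), and such that every element of A has only finitely many representations as an ordered sum of two elements of A. Set Δ = {(a, n) ∈ A × ℤ : a ≠ 0, or a = 0 and n ≥ 0}. Let S ⊆ Δ ∖ {(0,0)} be a Laurent subset. Then every γ ∈ A × ℤ admits only finitely many decompositions γ = γ₁ + ⋯ + γ_k as an ordered sum (over all lengths k ≥ 1) with every γᵢ ∈ S. -/
/-- `S ⊆ A × ℤ` is Laurent if for every `a ∈ A` the set `{n : (a, n) ∈ S}` is bounded below. -/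
def IsLaurent {A : Type*} (S : Set (A × ℤ)) : Prop :=
  ∀ a : A, BddBelow {n : ℤ | (a, n) ∈ S}

/-- The cone `Δ = {(a, n) : a ≠ 0, or a = 0 and n ≥ 0} ⊆ A × ℤ`. -/
def Delta (A : Type*) [AddCommMonoid A] : Set (A × ℤ) :=
  {x | x.1 ≠ 0 ∨ (x.1 = 0 ∧ 0 ≤ x.2)}

/-- Lists of bounded length with entries in a finite set form a finite set. -/
lemma aux_lists_finite {α : Type*} (K : ℕ) (E : Set α) (hE : E.Finite) :
    {l : List α | l.length ≤ K ∧ ∀ x ∈ l, x ∈ E}.Finite := by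
  induction K with
  | zero =>
    refine Set.Finite.subset (Set.finite_singleton []) ?_
    rintro l ⟨hl, -⟩
    simpa using List.length_eq_zero_iff.mp (Nat.le_zero.mp hl)
  | succ K ih =>
    refine Set.Finite.subset ((Set.finite_singleton []).union (hE.image2 List.cons ih)) ?_
    rintro l ⟨hl, hmem⟩
    cases l with
    | nil => exact Or.inl rfl
    | cons x t =>
      exact Or.inr (Set.mem_image2_of_mem (hmem x (by simp))
        ⟨by simpa using hl, fun y hy => hmem y (by simp [hy])⟩)

lemma aux_mem_sum {A : Type*} [AddCommMonoid A] :
    ∀ {m : List A} {x : A}, x ∈ m → ∃ c, x + c = m.sum := by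
  intro m
  induction m with
  | nil => intro x hx; simp at hx
  | cons y t ih =>
    intro x hx
    rcases List.mem_cons.mp hx with h | h
    · exact ⟨t.sum, by rw [h, List.sum_cons]⟩
    · obtain ⟨c, hc⟩ := ih h
      exact ⟨c + y, by rw [List.sum_cons, ← hc]; abel⟩

lemma aux_count {A : Type*} [AddCancelCommMonoid A] [DecidableEq A]
    (hzsf : ∀ a b : A, a + b = 0 → a = 0 ∧ b = 0)
    (hfin : ∀ a : A, {p : A × A | p.1 + p.2 = a}.Finite) :
    ∀ (m : List A) (a : A), m.sum = a →
      (m.filter (fun x => !decide (x = 0))).length ≤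
        ((hfin a).toFinset.image Prod.fst).card := by
  have hmem : ∀ (b s : A), b ∈ ((hfin s).toFinset.image Prod.fst) ↔ ∃ c, b + c = s := by
    intro b s
    constructor
    · intro h
      obtain ⟨p, hp, rfl⟩ := Finset.mem_image.mp h
      exact ⟨p.2, (hfin s).mem_toFinset.mp hp⟩
    · rintro ⟨c, hc⟩
      exact Finset.mem_image.mpr ⟨(b, c), (hfin s).mem_toFinset.mpr hc, rfl⟩
  intro m
  induction m with
  | nil => intro a _; simp
  | cons x t ih =>
    intro a ha
    rw [List.sum_cons] at ha
    by_cases hx : x = 0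
    · subst hx
      rw [zero_add] at ha
      simpa using ih a ha
    · have hlt : ((hfin t.sum).toFinset.image Prod.fst).card <
        ((hfin a).toFinset.image Prod.fst).card := by
        apply Finset.card_lt_card
        constructor
        · intro b hb
          obtain ⟨c, hc⟩ := (hmem b t.sum).mp hb
          refine (hmem b a).mpr ⟨c + x, ?_⟩
          calc b + (c + x) = x + (b + c) := by abel
            _ = x + t.sum := by rw [hc]
            _ = a := ha
        · intro hsub
          have haa : a ∈ (hfin a).toFinset.image Prod.fst := (hmem a a).mpr ⟨0, add_zero a⟩
          obtain ⟨c, hc⟩ := (hmem a t.sum).mp (hsub haa)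
          have h1 : x + (a + c) = a := by rw [hc]; exact ha
          have h2 : a + (x + c) = a + 0 := by
            calc a + (x + c) = x + (a + c) := by abel
              _ = a := h1
              _ = a + 0 := (add_zero a).symm
          exact hx (hzsf x c (add_left_cancel h2)).1
      have := ih t.sum rfl
      simp only [List.filter_cons, hx, decide_false, Bool.not_false, List.length_cons,
        if_true]
      omega
/-- Let `A` be a cancellative, zero-sum-free additive commutative monoid in
which every element has only finitely many representations as an ordered sum of two
elements, and let `S ⊆ Δ \ {(0,0)}` be a Laurent subset.  Then every `γ ∈ A × ℤ` admits
only finitely many decompositions `γ = γ₁ + ⋯ + γ_k` (ordered sums over all lengths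
`k ≥ 1`, here encoded as nonempty lists) with every `γᵢ ∈ S`. -/
theorem stmt5 {A : Type*} [AddCancelCommMonoid A]
    (hzsf : ∀ a b : A, a + b = 0 → a = 0 ∧ b = 0)
    (hfin : ∀ a : A, {p : A × A | p.1 + p.2 = a}.Finite)
    (S : Set (A × ℤ)) (hSsub : S ⊆ Delta A \ {(0, 0)}) (hS : IsLaurent S)
    (γ : A × ℤ) :
    {l : List (A × ℤ) | l ≠ [] ∧ (∀ x ∈ l, x ∈ S) ∧ l.sum = γ}.Finite := by
  classical
  obtain ⟨a, n⟩ := γ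
  set D : Finset A := (hfin a).toFinset.image Prod.fst with hD
  set N : ℕ := D.card with hN
  -- uniform lower bound on second components over D
  have hbdd : BddBelow (⋃ b ∈ (D : Set A), {m : ℤ | (b, m) ∈ S}) :=
    (Set.Finite.bddBelow_biUnion D.finite_toSet).mpr fun b _ => hS b
  obtain ⟨C0, hC0⟩ := hbdd
  set C : ℤ := min C0 0 with hCdef
  have hC0' : C ≤ 0 := min_le_right _ _
  have hC : ∀ b ∈ D, ∀ m : ℤ, (b, m) ∈ S → C ≤ m := by
    intro b hb m hm
    exact le_trans (min_le_left _ _) (hC0 (Set.mem_biUnion hb hm))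
  set K : ℕ := N + (n - N * C).toNat with hK
  set B : ℤ := n - K * C with hB
  -- helper: sums of components
  have fst_sum : ∀ l : List (A × ℤ), (l.map Prod.fst).sum = l.sum.1 := by
    intro l; induction l <;> simp [*]
  have snd_sum : ∀ l : List (A × ℤ), (l.map Prod.snd).sum = l.sum.2 := by
    intro l; induction l <;> simp [*]
  apply Set.Finite.subset (aux_lists_finite K (↑(D ×ˢ Finset.Icc C B)) (D ×ˢ Finset.Icc C B).finite_toSet)
  rintro l ⟨hne, hmemS, hsum⟩
  -- basic facts about entries
  have hfstD : ∀ x ∈ l, x.1 ∈ D := by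
    intro x hx
    have hx1 : x.1 ∈ l.map Prod.fst := List.mem_map.mpr ⟨x, hx, rfl⟩
    obtain ⟨c, hc⟩ := aux_mem_sum hx1
    rw [fst_sum l, hsum] at hc
    exact Finset.mem_image.mpr ⟨(x.1, c), (hfin a).mem_toFinset.mpr hc, rfl⟩
  have hlowC : ∀ x ∈ l, C ≤ x.2 := by
    intro x hx
    exact hC x.1 (hfstD x hx) x.2 (by simpa using hmemS x hx)
  have hzero1 : ∀ x ∈ l, x.1 = 0 → 1 ≤ x.2 := by
    intro x hx h0
    obtain ⟨hΔ, hne0⟩ := hSsub (hmemS x hx)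
    have h2 : 0 ≤ x.2 := by
      rcases hΔ with h | h
      · exact absurd h0 h
      · exact h.2
    have : x.2 ≠ 0 := by
      intro h
      exact hne0 (by simp [Set.mem_singleton_iff, Prod.ext_iff, h0, h])
    omega
  -- split into zero/nonzero first components
  set p : A × ℤ → Bool := fun x => decide (x.1 = 0) with hp
  have hperm : (l.filter p ++ l.filter (fun x => !p x)).Perm l := List.filter_append_perm p l
  set lz := l.filter p with hlz
  set lnz := l.filter (fun x => !p x) with hlnz
  have hlen : lz.length + lnz.length = l.length := by
    have := hperm.length_eq
    simpa [List.length_append] using this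
  -- nonzero count bound
  have hnz : lnz.length ≤ N := by
    have hfm : (l.map Prod.fst).filter (fun x => !decide (x = 0)) = lnz.map Prod.fst := by
      rw [hlnz, List.filter_map]
      rfl
    have := aux_count hzsf hfin (l.map Prod.fst) a (by rw [fst_sum l, hsum])
    rw [hfm] at this
    simpa using this
  -- sum of second components
  have hsum2 : (lz.map Prod.snd).sum + (lnz.map Prod.snd).sum = n := by
    have := (hperm.map Prod.snd).sum_eq
    rw [snd_sum l, hsum] at this
    simpa [List.sum_append] using this
  have hzsum : (lz.length : ℤ) ≤ (lz.map Prod.snd).sum := by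
    have := List.card_nsmul_le_sum (lz.map Prod.snd) (1 : ℤ) ?_
    · simpa [nsmul_eq_mul] using this
    · intro x hx
      obtain ⟨y, hy, rfl⟩ := List.mem_map.mp hx
      have hyl : y ∈ l := List.mem_of_mem_filter hy
      exact hzero1 y hyl (by simpa [hp] using List.of_mem_filter hy)
  have hnzsum : (N : ℤ) * C ≤ (lnz.map Prod.snd).sum := by
    have h1 := List.card_nsmul_le_sum (lnz.map Prod.snd) C ?_
    · have h2 : ((lnz.map Prod.snd).length : ℤ) * C ≥ (N : ℤ) * C := by
        apply mul_le_mul_of_nonpos_right _ hC0'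
        exact_mod_cast (by simpa using hnz)
      calc (N : ℤ) * C ≤ ((lnz.map Prod.snd).length : ℤ) * C := h2
        _ ≤ (lnz.map Prod.snd).sum := by simpa [nsmul_eq_mul] using h1
    · intro x hx
      obtain ⟨y, hy, rfl⟩ := List.mem_map.mp hx
      exact hlowC y (List.mem_of_mem_filter hy)
  -- length bound
  have hzle : (lz.length : ℤ) ≤ n - N * C := by linarith
  have hlenK : l.length ≤ K := by
    rw [← hlen, hK]
    omega
  refine ⟨hlenK, ?_⟩
  intro x hx
  have hup : x.2 ≤ B := by
    obtain ⟨s, t, hst⟩ := List.append_of_mem hx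
    have hsx : (s.map Prod.snd).sum + (x.2 + (t.map Prod.snd).sum) = n := by
      have h := snd_sum l
      rw [hsum] at h
      rw [hst] at h
      simpa [List.map_append, List.sum_append] using h
    have hs1 : (s.length : ℤ) * C ≤ (s.map Prod.snd).sum := by
      have := List.card_nsmul_le_sum (s.map Prod.snd) C (by
        intro y hy
        obtain ⟨z, hz, rfl⟩ := List.mem_map.mp hy
        exact hlowC z (by rw [hst]; simp [hz]))
      simpa [nsmul_eq_mul] using this
    have ht1 : (t.length : ℤ) * C ≤ (t.map Prod.snd).sum := by
      have := List.card_nsmul_le_sum (t.map Prod.snd) C (by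
        intro y hy
        obtain ⟨z, hz, rfl⟩ := List.mem_map.mp hy
        exact hlowC z (by rw [hst]; simp [hz]))
      simpa [nsmul_eq_mul] using this
    have hlen2 : s.length + t.length + 1 = l.length := by
      rw [hst]; simp; omega
    have hKC : (K : ℤ) * C ≤ (s.length : ℤ) * C + (t.length : ℤ) * C := by
      rw [← add_mul]
      apply mul_le_mul_of_nonpos_right _ hC0'
      have h3 : s.length + t.length ≤ K := by omega
      exact_mod_cast h3
    rw [hB]; linarith
  simp only [Finset.coe_product, Set.mem_prod, Finset.mem_coe, Finset.mem_Icc]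
  exact ⟨hfstD x hx, hlowC x hx, hup⟩
end

section
/- Fix a positive integer d ≥ 1, and suppose given rational numbers aₙ for n ∈ ℤ satisfying aₙ = a₋ₙ and a_{n+d} = aₙ for all n ∈ ℤ. Then the power series Σ_{n≥0} n aₙ qⁿ ∈ ℚ⟦q⟧ is the Taylor expansion at q = 0 of a rational function f(q) ∈ ℚ(q) that is invariant under the substitution q ↦ 1/q, i.e. f(1/q) = f(q) as rational functions. -/
open Polynomial


/-- Fix `d ≥ 1` and rational numbers `aₙ` (`n ∈ ℤ`) with `aₙ = a₋ₙ` and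
`a_{n+d} = aₙ` for all `n`.  Then the power series `Σ_{n ≥ 0} n aₙ qⁿ ∈ ℚ⟦q⟧` is the Taylor
expansion at `q = 0` of a rational function `f(q) ∈ ℚ(q)` (equality being taken inside the
field of Laurent series `ℚ⸨q⸩`, which contains both `ℚ⟦q⟧` and the rational functions whose
denominator does not vanish at `0`), and `f` is invariant under `q ↦ 1/q`:
`f(1/q) = f(q)` as rational functions (`f(1/q)` being `f` evaluated at `X⁻¹ ∈ ℚ(q)`). -/
theorem stmt7 (d : ℕ) (hd : 1 ≤ d) (a : ℤ → ℚ)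
    (hsym : ∀ n : ℤ, a n = a (-n)) (hper : ∀ n : ℤ, a (n + (d : ℤ)) = a n) :
    ∃ f : RatFunc ℚ,
      (HahnSeries.ofPowerSeries ℤ ℚ) (PowerSeries.mk fun n : ℕ => (n : ℚ) * a (n : ℤ)) =
        (f : LaurentSeries ℚ) ∧
      RatFunc.eval (algebraMap ℚ (RatFunc ℚ)) (RatFunc.X)⁻¹ f = f := by
  set c : ℕ → ℚ := fun n => if n < d then (n : ℚ) * a n else (2 * d - n : ℚ) * a n with hc
  set N : ℚ[X] := ∑ n ∈ Finset.range (2 * d), C (c n) * X ^ n with hN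
  set D : ℚ[X] := (1 - X ^ d) ^ 2 with hD
  set S : PowerSeries ℚ := PowerSeries.mk fun n : ℕ => (n : ℚ) * a (n : ℤ) with hS
  -- periodicity/symmetry in convenient forms
  have ha1 : ∀ k : ℕ, d ≤ k → a ((k - d : ℕ) : ℤ) = a k := by
    intro k hk
    have h := hper ((k : ℤ) - (d : ℤ))
    rw [sub_add_cancel] at h
    rw [h]; congr 1; omega
  have ha2 : ∀ k : ℕ, 2 * d ≤ k → a ((k - 2 * d : ℕ) : ℤ) = a k := by
    intro k hk
    have h1 := hper ((k : ℤ) - (d : ℤ))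
    rw [sub_add_cancel] at h1
    have h2 := hper ((k : ℤ) - 2 * (d : ℤ))
    have : (k : ℤ) - 2 * d + d = k - d := by ring
    rw [this] at h2
    rw [h1, h2]; congr 1; omega
  have hNcoeff : ∀ k, N.coeff k = if k < 2 * d then c k else 0 := by
    intro k
    rw [hN, Polynomial.finset_sum_coeff]
    simp [Polynomial.coeff_C_mul, Polynomial.coeff_X_pow, Finset.sum_ite_eq, Finset.mem_range]
  have key : (D : PowerSeries ℚ) * S = (N : PowerSeries ℚ) := by
    have expand : (D : PowerSeries ℚ) * S =
        S + PowerSeries.X ^ (2 * d) * S - (PowerSeries.X ^ d * S + PowerSeries.X ^ d * S) := by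
      rw [hD]
      push_cast
      ring
    ext k
    rw [expand, map_sub, map_add, map_add, PowerSeries.coeff_X_pow_mul',
      PowerSeries.coeff_X_pow_mul', Polynomial.coeff_coe, hNcoeff]
    simp only [hS, PowerSeries.coeff_mk, hc]
    rcases lt_or_ge k d with h1 | h1
    · have e1 : ¬ d ≤ k := by omega
      have e2 : ¬ 2 * d ≤ k := by omega
      have e3 : k < 2 * d := by omega
      simp [e1, e2, e3, h1]
    rcases lt_or_ge k (2 * d) with h2 | h2
    · have e2 : ¬ 2 * d ≤ k := by omega
      have e4 : ¬ k < d := by omega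
      rw [if_pos h1, if_neg e2, if_pos h2, if_neg e4]
      rw [ha1 k h1]
      have : ((k - d : ℕ) : ℚ) = (k : ℚ) - d := by
        push_cast [h1]; ring
      rw [this]
      ring
    · have e4 : ¬ k < 2 * d := by omega
      have e5 : d ≤ k := by omega
      rw [if_pos e5, if_pos h2, if_neg e4, ha1 k e5, ha2 k h2]
      have c1 : ((k - d : ℕ) : ℚ) = (k : ℚ) - d := by push_cast [e5]; ring
      have c2 : ((k - 2 * d : ℕ) : ℚ) = (k : ℚ) - 2 * d := by push_cast [h2]; ring
      rw [c1, c2]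
      ring
  -- basic nonvanishing facts
  have hD0 : D ≠ 0 := by
    rw [hD]
    apply pow_ne_zero
    intro h
    have := congrArg (Polynomial.eval (0 : ℚ)) h
    simp [zero_pow (by omega : d ≠ 0)] at this
  -- the rational function
  refine ⟨algebraMap ℚ[X] (RatFunc ℚ) N / algebraMap ℚ[X] (RatFunc ℚ) D, ?_, ?_⟩
  · -- Laurent series equality
    have hDL : (HahnSeries.ofPowerSeries ℤ ℚ) (D : PowerSeries ℚ) ≠ 0 := by
      rw [map_ne_zero_iff _ HahnSeries.ofPowerSeries_injective]
      exact_mod_cast hD0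
    simp only [show ∀ p : ℚ[X], algebraMap ℚ[X] (RatFunc ℚ) p = (p : RatFunc ℚ) from fun _ => rfl]
    rw [map_div₀, ← RatFunc.coe_coe N, ← RatFunc.coe_coe D]
    rw [show ∀ p : ℚ[X], ((p : PowerSeries ℚ) : LaurentSeries ℚ)
        = (HahnSeries.ofPowerSeries ℤ ℚ) (p : PowerSeries ℚ) from fun _ => rfl]
    rw [eq_div_iff hDL, ← map_mul, mul_comm S, key]
  · -- symmetry under q ↦ 1/q
    set φ := algebraMap ℚ (RatFunc ℚ) with hφ
    set t := (RatFunc.X : RatFunc ℚ)⁻¹ with htdef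
    -- transcendence of X⁻¹ and non-vanishing of evaluations
    have hX : Transcendental ℚ (RatFunc.X : RatFunc ℚ) := by
      have h := (transcendental_algebraMap_iff (R := ℚ) (S := ℚ[X]) (A := RatFunc ℚ)
        (RatFunc.algebraMap_injective ℚ)).2 (Polynomial.transcendental_X ℚ)
      rwa [RatFunc.algebraMap_X] at h
    have ht : Transcendental ℚ t := fun h => hX (IsAlgebraic.inv_iff.mp h)
    have heval : ∀ p : ℚ[X], p ≠ 0 → Polynomial.eval₂ φ t p ≠ 0 := by
      intro p hp h0
      apply hp
      apply transcendental_iff_injective.mp ht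
      rw [map_zero]
      rw [Polynomial.aeval_def, ← hφ, h0]
    have hDt : Polynomial.eval₂ φ t D ≠ 0 := heval D hD0
    have hXpow : (RatFunc.X : RatFunc ℚ) ^ (2 * d) ≠ 0 := pow_ne_zero _ RatFunc.X_ne_zero
    -- eval of f is N(t)/D(t)
    have hfD : (algebraMap ℚ[X] (RatFunc ℚ) N / algebraMap ℚ[X] (RatFunc ℚ) D)
        * algebraMap ℚ[X] (RatFunc ℚ) D = algebraMap ℚ[X] (RatFunc ℚ) N :=
      div_mul_cancel₀ _ (RatFunc.algebraMap_ne_zero hD0)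
    have hevalf : RatFunc.eval φ t (algebraMap ℚ[X] (RatFunc ℚ) N / algebraMap ℚ[X] (RatFunc ℚ) D)
        = Polynomial.eval₂ φ t N / Polynomial.eval₂ φ t D := by
      have h1 := RatFunc.eval_mul (f := φ) (a := t)
        (x := algebraMap ℚ[X] (RatFunc ℚ) N / algebraMap ℚ[X] (RatFunc ℚ) D)
        (y := algebraMap ℚ[X] (RatFunc ℚ) D)
        (heval _ (RatFunc.denom_ne_zero _)) (heval _ (RatFunc.denom_ne_zero _))
      rw [hfD] at h1
      rw [RatFunc.eval_algebraMap, RatFunc.eval_algebraMap] at h1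
      simp only [Algebra.algebraMap_self, Polynomial.map_id] at h1
      rw [eq_div_iff hDt]
      exact h1.symm
    -- symmetry of the coefficients
    have haa : ∀ j : ℕ, j ≤ 2 * d → a ((2 * d - j : ℕ) : ℤ) = a (j : ℤ) := by
      intro j hj
      have h1 := hper (-(j : ℤ) + d)
      have h2 := hper (-(j : ℤ))
      have e : ((2 * d - j : ℕ) : ℤ) = -(j : ℤ) + d + d := by omega
      rw [e, h1, h2, ← hsym]
    have hcsym : ∀ j : ℕ, j ≤ 2 * d → c (2 * d - j) = c j := by
      intro j hj
      rcases lt_or_ge j d with h1 | h1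
      · have e1 : ¬ (2 * d - j < d) := by omega
        simp only [hc]
        rw [if_neg e1, if_pos h1, haa j hj]
        have : ((2 * d - j : ℕ) : ℚ) = 2 * d - j := by push_cast [hj]; ring
        rw [this]; ring
      · rcases eq_or_lt_of_le h1 with h2 | h2
        · rw [← h2]
          congr 1
          omega
        · have e1 : 2 * d - j < d := by omega
          have e2 : ¬ j < d := by omega
          simp only [hc]
          rw [if_pos e1, if_neg e2, haa j hj]
          have : ((2 * d - j : ℕ) : ℚ) = 2 * d - j := by push_cast [hj]; ring
          rw [this]
    have hc2d : c (2 * d) = 0 := by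
      simp only [hc]
      rw [if_neg (by omega)]
      push_cast
      ring
    have hXd : (RatFunc.X : RatFunc ℚ) ^ d ≠ 0 := pow_ne_zero _ RatFunc.X_ne_zero
    -- the two palindromic identities
    have hDid : (RatFunc.X : RatFunc ℚ) ^ (2 * d) * Polynomial.eval₂ φ t D
        = algebraMap ℚ[X] (RatFunc ℚ) D := by
      rw [hD]
      simp only [Polynomial.eval₂_pow, Polynomial.eval₂_sub, Polynomial.eval₂_one,
        Polynomial.eval₂_X_pow, Polynomial.eval₂_X, map_pow, map_sub, map_one,
        RatFunc.algebraMap_X, htdef, inv_pow]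
      rw [show 2 * d = d + d by ring, pow_add]
      have step : (RatFunc.X : RatFunc ℚ) ^ d * (1 - ((RatFunc.X : RatFunc ℚ) ^ d)⁻¹)
          = RatFunc.X ^ d - 1 := by
        rw [mul_sub, mul_inv_cancel₀ hXd, mul_one]
      calc (RatFunc.X : RatFunc ℚ) ^ d * RatFunc.X ^ d * (1 - (RatFunc.X ^ d)⁻¹) ^ 2
          = ((RatFunc.X : RatFunc ℚ) ^ d * (1 - (RatFunc.X ^ d)⁻¹)) ^ 2 := by ring
        _ = ((RatFunc.X : RatFunc ℚ) ^ d - 1) ^ 2 := by rw [step]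
        _ = (1 - (RatFunc.X : RatFunc ℚ) ^ d) ^ 2 := by ring
    have term1 : ∀ n : ℕ, n ≤ 2 * d → (RatFunc.X : RatFunc ℚ) ^ (2 * d)
        * Polynomial.eval₂ φ t (C (c n) * X ^ n) = φ (c n) * RatFunc.X ^ (2 * d - n) := by
      intro n hn
      rw [Polynomial.eval₂_mul, Polynomial.eval₂_C, Polynomial.eval₂_X_pow]
      simp only [htdef, inv_pow]
      have hXn : (RatFunc.X : RatFunc ℚ) ^ n ≠ 0 := pow_ne_zero _ RatFunc.X_ne_zero
      obtain ⟨m, hm⟩ : ∃ m, 2 * d = m + n := ⟨2 * d - n, by omega⟩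
      rw [hm, Nat.add_sub_cancel, pow_add]
      field_simp
    have term2 : ∀ n : ℕ, algebraMap ℚ[X] (RatFunc ℚ) (C (c n) * X ^ n)
        = φ (c n) * RatFunc.X ^ n := by
      intro n
      rw [map_mul, map_pow, RatFunc.algebraMap_C, RatFunc.algebraMap_X, hφ]
      congr 1
      simp [RatFunc.algebraMap_eq_C]
    have hNid : (RatFunc.X : RatFunc ℚ) ^ (2 * d) * Polynomial.eval₂ φ t N
        = algebraMap ℚ[X] (RatFunc ℚ) N := by
      rw [hN, Polynomial.eval₂_finset_sum, Finset.mul_sum, map_sum]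
      calc ∑ n ∈ Finset.range (2 * d),
            (RatFunc.X : RatFunc ℚ) ^ (2 * d) * Polynomial.eval₂ φ t (C (c n) * X ^ n)
          = ∑ n ∈ Finset.range (2 * d), φ (c n) * RatFunc.X ^ (2 * d - n) :=
            Finset.sum_congr rfl fun n hn => term1 n (Finset.mem_range.mp hn).le
        _ = ∑ n ∈ Finset.range (2 * d + 1), φ (c n) * RatFunc.X ^ (2 * d - n) := by
            rw [Finset.sum_range_succ, hc2d, map_zero, zero_mul, add_zero]
        _ = ∑ n ∈ Finset.range (2 * d + 1), φ (c n) * RatFunc.X ^ n := by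
            rw [← Finset.sum_range_reflect (fun n => φ (c n) * RatFunc.X ^ n) (2 * d + 1)]
            refine Finset.sum_congr rfl fun j hj => ?_
            have hj' : j ≤ 2 * d := by
              have := Finset.mem_range.mp hj
              omega
            rw [show 2 * d + 1 - 1 - j = 2 * d - j by omega, hcsym j hj']
        _ = ∑ n ∈ Finset.range (2 * d), φ (c n) * RatFunc.X ^ n := by
            rw [Finset.sum_range_succ, hc2d, map_zero, zero_mul, add_zero]
        _ = ∑ n ∈ Finset.range (2 * d), algebraMap ℚ[X] (RatFunc ℚ) (C (c n) * X ^ n) :=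
            Finset.sum_congr rfl fun n _ => (term2 n).symm
    rw [hevalf, ← hNid, ← hDid, mul_div_mul_left _ _ hXpow]
end

section
/- Let B be a complex unital Banach algebra, let D : B → B be a continuous derivation (a bounded linear map with D(xy) = D(x)y + xD(y) for all x, y), and let a, b ∈ B and n ∈ ℤ satisfy D(a) = 0 and D(b) = n·a·b. Then Dᵏ(b) = nᵏ aᵏ b for every k ≥ 0, and consequently exp(D)(b) = exp(n·a)·b, where exp(D) is the exponential of D in the Banach algebra of bounded linear operators on B and exp(n·a) is the exponential of n·a in B. -/
/-- Let `B` be a complex unital Banach algebra, `D : B → B` a continuous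
derivation, and `a b ∈ B`, `n ∈ ℤ` with `D a = 0` and `D b = n·a·b`.  Then
`Dᵏ b = nᵏ aᵏ b` for every `k ≥ 0`, and `exp(D) b = exp(n·a) · b`, where `exp D` is the
exponential in the Banach algebra of bounded operators on `B` and `exp (n·a)` the
exponential in `B`. -/
theorem stmt8 {B : Type*} [NormedRing B] [NormedAlgebra ℂ B] [CompleteSpace B]
    (D : B →L[ℂ] B) (hder : ∀ x y : B, D (x * y) = D x * y + x * D y)
    (a b : B) (n : ℤ) (ha : D a = 0) (hb : D b = n • (a * b)) :
    (∀ k : ℕ, (D ^ k) b = (n ^ k) • (a ^ k * b)) ∧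
      (NormedSpace.exp D) b = NormedSpace.exp (n • a) * b := by
  have hD1 : D (1 : B) = 0 := by
    have h := hder 1 1
    simp only [mul_one, one_mul] at h
    exact (left_eq_add.mp h)
  have hak : ∀ k : ℕ, D (a ^ k) = 0 := by
    intro k
    induction k with
    | zero => simpa using hD1
    | succ k ih => rw [pow_succ, hder, ih, ha]; simp
  have hk : ∀ k : ℕ, (D ^ k) b = (n ^ k) • (a ^ k * b) := by
    intro k
    induction k with
    | zero => simp
    | succ k ih =>
      rw [pow_succ', ContinuousLinearMap.mul_apply, ih, map_zsmul, hder, hak k,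
        hb, zero_mul, zero_add, mul_smul_comm, smul_smul, ← pow_succ,
        ← mul_assoc, ← pow_succ]
  refine ⟨hk, ?_⟩
  have key : ∀ k : ℕ, (D ^ k) b = (n • a) ^ k * b := by
    intro k
    rw [hk k, smul_pow, smul_mul_assoc]
  rw [NormedSpace.exp_eq_tsum (𝕂 := ℂ), NormedSpace.exp_eq_tsum (𝕂 := ℂ)]
  have hsD := (NormedSpace.expSeries_summable' (𝕂 := ℂ) D).hasSum
  have hsa : Summable fun k : ℕ => ((k.factorial : ℂ))⁻¹ • (n • a) ^ k :=
    NormedSpace.expSeries_summable' (𝕂 := ℂ) (n • a)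
  have h1 := ((ContinuousLinearMap.apply ℂ B b).hasSum hsD).tsum_eq
  simp only [ContinuousLinearMap.apply_apply, ContinuousLinearMap.smul_apply] at h1
  calc (∑' k : ℕ, (k.factorial : ℂ)⁻¹ • D ^ k) b
      = ∑' k : ℕ, (k.factorial : ℂ)⁻¹ • ((D ^ k) b) := by
        rw [← h1]
    _ = ∑' k : ℕ, ((k.factorial : ℂ)⁻¹ • (n • a) ^ k) * b := by
        simp only [key, smul_mul_assoc]
    _ = (∑' k : ℕ, (k.factorial : ℂ)⁻¹ • (n • a) ^ k) * b :=
        hsa.tsum_mul_right b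
end
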